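/- Let ℚ⟨Y⟩ be the free associative ℚ-algebra on letters Y = {y_n : n ≥ 1}, with the harmonic product * defined recursively by 1 * w = w * 1 = w and y_{k₁}w₁ * y_{k₂}w₂ = y_{k₁}(w₁ * y_{k₂}w₂) + y_{k₂}(y_{k₁}w₁ * w₂) + y_{k₁+k₂}(w₁ * w₂). Then (ℚ⟨Y⟩, *) is a commutative and associative ℚ-algebra with unit 1. -/

import Mathlib

/-- Words in the letters y_k, k ∈ ℤ_{>0}. -/
abbrev YW : Type := List ℕ+

/-- ℚ⟨Y⟩, the free associative ℚ-algebra on the letters y_k (k ≥ 1), realized as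
finitely supported ℚ-linear combinations of words. -/
abbrev HY : Type := YW →₀ ℚ

/-- Harmonic (stuffle) product of two words, as the list (with multiplicity) of
resulting words, defined by the recursion 1 * w = w * 1 = w and
y_{k₁}w₁ * y_{k₂}w₂ = y_{k₁}(w₁ * y_{k₂}w₂) + y_{k₂}(y_{k₁}w₁ * w₂) + y_{k₁+k₂}(w₁ * w₂). -/
def st : YW → YW → List YW
  | [], v => [v]
  | u, [] => [u]
  | a :: u, b :: v =>
      ((st u (b :: v)).map (a :: ·)) ++ ((st (a :: u) v).map (b :: ·))
        ++ ((st u v).map ((a + b) :: ·))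
termination_by u v => u.length + v.length

noncomputable def P (u v : YW) : HY := ((st u v).map fun w => Finsupp.single w (1 : ℚ)).sum

noncomputable def cns (a : ℕ+) (f : HY) : HY := Finsupp.mapDomain (a :: ·) f

lemma st_nil_right (u : YW) : st u [] = [u] := by cases u <;> simp [st]
lemma P_nil_left (v : YW) : P [] v = Finsupp.single v 1 := by simp [P, st]
lemma P_nil_right (u : YW) : P u [] = Finsupp.single u 1 := by simp [P, st_nil_right]

lemma cns_listsum (a : ℕ+) (l : List YW) :
    cns a ((l.map fun w => Finsupp.single w (1:ℚ)).sum)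
      = ((l.map (a :: ·)).map fun w => Finsupp.single w (1:ℚ)).sum := by
  induction l with
  | nil => simp [cns]
  | cons w l ih => simp [cns, Finsupp.mapDomain_add, Finsupp.mapDomain_single] at *; simp [ih]

lemma P_cons (a b : ℕ+) (u v : YW) :
    P (a :: u) (b :: v) = cns a (P u (b :: v)) + cns b (P (a :: u) v) + cns (a+b) (P u v) := by
  rw [P, st]
  simp only [List.map_append, List.sum_append, cns_listsum, P]

lemma cns_zero (a : ℕ+) : cns a 0 = 0 := Finsupp.mapDomain_zero
lemma cns_add (a : ℕ+) (f g : HY) : cns a (f + g) = cns a f + cns a g := Finsupp.mapDomain_add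
lemma cns_smul (a : ℕ+) (c : ℚ) (f : HY) : cns a (c • f) = c • cns a f := by
  simp [cns, Finsupp.mapDomain_smul]
lemma cns_single (a : ℕ+) (w : YW) (c : ℚ) :
    cns a (Finsupp.single w c) = Finsupp.single (a :: w) c := by
  simp [cns, Finsupp.mapDomain_single]

lemma P_comm (u v : YW) : P u v = P v u := by
  induction u, v using st.induct with
  | case1 v => rw [P_nil_left, P_nil_right]
  | case2 u h => rw [P_nil_left, P_nil_right]
  | case3 a u b v ih1 ih2 ih3 =>
      rw [P_cons, P_cons, ih1, ih2, ih3, add_comm a b]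
      abel

/-- The harmonic product on ℚ⟨Y⟩, the ℚ-bilinear extension of `st` on words. -/
noncomputable def hMul (f g : HY) : HY :=
  f.sum fun u a => g.sum fun v b =>
    (a * b) • ((st u v).map fun w => Finsupp.single w (1 : ℚ)).sum

/-- (ℚ⟨Y⟩, *) is a commutative and associative ℚ-algebra with unit the empty word 1:
the harmonic product is ℚ-bilinear, commutative, associative, and unital. -/

noncomputable def G (u : YW) : HY →ₗ[ℚ] HY :=
  Finsupp.lsum ℚ fun v => LinearMap.toSpanSingleton ℚ HY (P u v)

noncomputable def B : HY →ₗ[ℚ] HY →ₗ[ℚ] HY :=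
  Finsupp.lsum ℚ fun u => LinearMap.toSpanSingleton ℚ (HY →ₗ[ℚ] HY) (G u)

lemma G_apply (u : YW) (g : HY) : G u g = g.sum fun v b => b • P u v := by
  rw [G, Finsupp.lsum_apply]
  exact Finsupp.sum_congr fun v _ => rfl

lemma B_apply (f g : HY) : B f g = f.sum fun u a => a • G u g := by
  rw [B, Finsupp.lsum_apply, Finsupp.sum, Finsupp.sum, LinearMap.sum_apply]
  exact Finset.sum_congr rfl fun u _ => rfl

lemma hMul_eq_B (f g : HY) : hMul f g = B f g := by
  rw [hMul, B_apply]
  refine Finsupp.sum_congr fun u _ => ?_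
  rw [G_apply, Finsupp.smul_sum]
  refine Finsupp.sum_congr fun v _ => ?_
  rw [smul_smul, P]

lemma B_single_single (u v : YW) (a b : ℚ) :
    B (Finsupp.single u a) (Finsupp.single v b) = (a * b) • P u v := by
  rw [B, Finsupp.lsum_single, LinearMap.toSpanSingleton_apply, LinearMap.smul_apply,
    G, Finsupp.lsum_single, LinearMap.toSpanSingleton_apply, smul_smul]

-- unit lemmas
lemma B_one_left (f : HY) : B (Finsupp.single ([] : YW) (1:ℚ)) f = f := by
  induction f using Finsupp.induction_linear with
  | zero => simp
  | add f g hf hg => rw [map_add, hf, hg]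
  | single w c => rw [B_single_single, P_nil_left, one_mul, Finsupp.smul_single, smul_eq_mul, mul_one]

lemma B_one_right (f : HY) : B f (Finsupp.single ([] : YW) (1:ℚ)) = f := by
  induction f using Finsupp.induction_linear with
  | zero => simp
  | add f g hf hg => rw [map_add, LinearMap.add_apply, hf, hg]
  | single w c => rw [B_single_single, P_nil_right, mul_one, Finsupp.smul_single, smul_eq_mul, mul_one]

-- commutativity
lemma B_comm (f g : HY) : B f g = B g f := by
  induction f using Finsupp.induction_linear with
  | zero => simp
  | add f f' hf hf' => rw [map_add, LinearMap.add_apply, hf, hf', map_add]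
  | single u a =>
      induction g using Finsupp.induction_linear with
      | zero => simp
      | add g g' hg hg' => rw [map_add, map_add, LinearMap.add_apply, hg, hg']
      | single v b => rw [B_single_single, B_single_single, P_comm, mul_comm]

-- left recursion lemma
lemma B_cns_left (x c : ℕ+) (t : YW) (f : HY) :
    B (cns x f) (Finsupp.single (c :: t) (1:ℚ))
      = cns x (B f (Finsupp.single (c :: t) 1)) + cns c (B (cns x f) (Finsupp.single t 1))
        + cns (x + c) (B f (Finsupp.single t 1)) := by
  induction f using Finsupp.induction_linear with
  | zero => simp [cns_zero]
  | add f g hf hg =>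
      simp only [cns_add, map_add, LinearMap.add_apply, hf, hg]
      abel
  | single w r =>
      simp only [cns_single, B_single_single, P_cons, mul_one, one_mul, smul_add, cns_smul]

-- right recursion lemma
lemma B_cns_right (a x : ℕ+) (u : YW) (g : HY) :
    B (Finsupp.single (a :: u) (1:ℚ)) (cns x g)
      = cns a (B (Finsupp.single u 1) (cns x g)) + cns x (B (Finsupp.single (a :: u) 1) g)
        + cns (a + x) (B (Finsupp.single u 1) g) := by
  induction g using Finsupp.induction_linear with
  | zero => simp [cns_zero]
  | add f g hf hg =>
      simp only [cns_add, map_add, hf, hg]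
      abel
  | single w r =>
      simp only [cns_single, B_single_single, P_cons, mul_one, one_mul, smul_add, cns_smul]

lemma cns_sub (a : ℕ+) (f g : HY) : cns a (f - g) = cns a f - cns a g := by
  have h : f - g = f + (-1 : ℚ) • g := by simp [sub_eq_add_neg]
  rw [h, cns_add, cns_smul]
  simp [sub_eq_add_neg]

theorem B_core : ∀ (u v t : YW),
    B (P u v) (Finsupp.single t (1:ℚ)) = B (Finsupp.single u (1:ℚ)) (P v t)
  | [], v, t => by
      rw [P_nil_left, B_single_single, one_mul, one_smul, B_one_left]
  | a :: u, [], t => by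
      rw [P_nil_right, P_nil_left]
  | a :: u, b :: v, [] => by
      rw [B_one_right, P_nil_right, B_single_single, one_mul, one_smul]
  | a :: u, b :: v, c :: t => by
      have ih1 := B_core u (b :: v) (c :: t)
      have ih2 := B_core u (b :: v) t
      have ih3 := B_core (a :: u) v (c :: t)
      have ih4 := B_core (a :: u) v t
      have ih5 := B_core u v (c :: t)
      have ih6 := B_core u v t
      have ihc := B_core (a :: u) (b :: v) t
      have hY : B (cns a (P u (b :: v))) (Finsupp.single t (1:ℚ))
          + B (cns b (P (a :: u) v)) (Finsupp.single t 1)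
          + B (cns (a + b) (P u v)) (Finsupp.single t 1)
          = B (Finsupp.single (a :: u) (1:ℚ)) (P (b :: v) t) := by
        rw [← ihc]
        conv_rhs => rw [P_cons a b u v]
        rw [map_add, map_add, LinearMap.add_apply, LinearMap.add_apply]
      have hy3 : B (cns (a + b) (P u v)) (Finsupp.single t (1:ℚ))
          = B (Finsupp.single (a :: u) (1:ℚ)) (P (b :: v) t)
            - B (cns a (P u (b :: v))) (Finsupp.single t 1)
            - B (cns b (P (a :: u) v)) (Finsupp.single t 1) := by
        rw [← hY]; abel
      have hZ : B (Finsupp.single u (1:ℚ)) (cns b (P v (c :: t)))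
          + B (Finsupp.single u (1:ℚ)) (cns c (P (b :: v) t))
          + B (Finsupp.single u (1:ℚ)) (cns (b + c) (P v t))
          = B (Finsupp.single u (1:ℚ)) (P (b :: v) (c :: t)) := by
        conv_rhs => rw [P_cons b c v t]
        rw [map_add, map_add]
      have hz3 : B (Finsupp.single u (1:ℚ)) (cns (b + c) (P v t))
          = B (Finsupp.single u (1:ℚ)) (P (b :: v) (c :: t))
            - B (Finsupp.single u (1:ℚ)) (cns b (P v (c :: t)))
            - B (Finsupp.single u (1:ℚ)) (cns c (P (b :: v) t)) := by
        rw [← hZ]; abel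
      conv_lhs => rw [P_cons a b u v]
      rw [map_add, map_add, LinearMap.add_apply, LinearMap.add_apply,
        B_cns_left a c t (P u (b :: v)), B_cns_left b c t (P (a :: u) v),
        B_cns_left (a + b) c t (P u v)]
      conv_rhs => rw [P_cons b c v t]
      rw [map_add, map_add,
        B_cns_right a b u (P v (c :: t)), B_cns_right a c u (P (b :: v) t),
        B_cns_right a (b + c) u (P v t)]
      rw [ih1, ih2, ih3, ih4, ih5, ih6, hy3, hz3, cns_sub, cns_sub, cns_sub, cns_sub,
        add_assoc a b c]
      abel
termination_by u v t => u.length + v.length + t.length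

lemma B_assoc (f g h : HY) : B (B f g) h = B f (B g h) := by
  induction f using Finsupp.induction_linear with
  | zero => simp
  | add f f' hf hf' => simp only [map_add, LinearMap.add_apply, hf, hf']
  | single u a =>
    induction g using Finsupp.induction_linear with
    | zero => simp
    | add g g' hg hg' => simp only [map_add, LinearMap.add_apply, hg, hg']
    | single v b =>
      induction h using Finsupp.induction_linear with
      | zero => simp
      | add h h' hh hh' => simp only [map_add, hh, hh']
      | single t c =>
        have ht : (Finsupp.single t c : HY) = c • Finsupp.single t (1:ℚ) := by
          rw [Finsupp.smul_single, smul_eq_mul, mul_one]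
        have hu : (Finsupp.single u a : HY) = a • Finsupp.single u (1:ℚ) := by
          rw [Finsupp.smul_single, smul_eq_mul, mul_one]
        conv_lhs => rw [B_single_single u v a b, map_smul, LinearMap.smul_apply, ht,
          map_smul, B_core u v t]
        conv_rhs => rw [B_single_single v t b c, map_smul, hu, map_smul,
          LinearMap.smul_apply]
        rw [smul_smul, smul_smul]
        congr 1
        ring

theorem harmonic_comm_assoc_algebra :
    (∀ f g h : HY, hMul (f + g) h = hMul f h + hMul g h) ∧
    (∀ f g h : HY, hMul f (g + h) = hMul f g + hMul f h) ∧
    (∀ (c : ℚ) (f g : HY), hMul (c • f) g = c • hMul f g) ∧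
    (∀ (c : ℚ) (f g : HY), hMul f (c • g) = c • hMul f g) ∧
    (∀ f g : HY, hMul f g = hMul g f) ∧
    (∀ f g h : HY, hMul (hMul f g) h = hMul f (hMul g h)) ∧
    (∀ f : HY, hMul (Finsupp.single ([] : YW) (1 : ℚ)) f = f) ∧
    (∀ f : HY, hMul f (Finsupp.single ([] : YW) (1 : ℚ)) = f) := by
  refine ⟨?_, ?_, ?_, ?_, ?_, ?_, ?_, ?_⟩
  · intro f g h; simp only [hMul_eq_B, map_add, LinearMap.add_apply]
  · intro f g h; simp only [hMul_eq_B, map_add]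
  · intro c f g; simp only [hMul_eq_B, map_smul, LinearMap.smul_apply]
  · intro c f g; simp only [hMul_eq_B, map_smul]
  · intro f g; simp only [hMul_eq_B]; exact B_comm f g
  · intro f g h; simp only [hMul_eq_B]; exact B_assoc f g h
  · intro f; rw [hMul_eq_B]; exact B_one_left f
  · intro f; rw [hMul_eq_B]; exact B_one_right f
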